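/- Let φ, ψ : ℝ → ℝ be continuous functions with compact support. Then lim_{α→1⁻} ((1−α)/2) ∫_ℝ ∫_ℝ φ(x) |x−y|^{-α} ψ(y) dx dy = ∫_ℝ φ(x) ψ(x) dx; that is, as α approaches 1 from below, the renormalized Riesz kernels ((1−α)/2)|x−y|^{-α} on ℝ act as an approximate identity, so the corresponding colored-noise covariance functional converges to the white-noise covariance. -/

import Mathlib

open Real Filter MeasureTheory Set
open scoped Convolution
set_option maxHeartbeats 1000000

lemma intervalIntegrable_abs_rpow {r : ℝ} (h : -1 < r) (a b : ℝ) :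
    IntervalIntegrable (fun t : ℝ => |t| ^ r) volume a b := by
  have key : ∀ c : ℝ, 0 ≤ c → IntervalIntegrable (fun t : ℝ => |t| ^ r) volume 0 c := by
    intro c hc
    rw [intervalIntegrable_iff_integrableOn_Ioc_of_le hc]
    have h1 : IntegrableOn (fun t : ℝ => t ^ r) (Ioc 0 c) := by
      have := intervalIntegral.intervalIntegrable_rpow' (a := 0) (b := c) h
      rwa [intervalIntegrable_iff_integrableOn_Ioc_of_le hc] at this
    exact h1.congr_fun (fun x hx => by rw [abs_of_pos hx.1]) measurableSet_Ioc
  have all : ∀ c : ℝ, IntervalIntegrable (fun t : ℝ => |t| ^ r) volume 0 c := by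
    intro c
    rcases le_total 0 c with hc | hc
    · exact key c hc
    · have := key (-c) (by linarith)
      rw [IntervalIntegrable.iff_comp_neg] at this
      simpa using this
  exact (all a).symm.trans (all b)

lemma integral_abs_rpow {α δ : ℝ} (h0 : 0 < α) (h1 : α < 1) (hδ : 0 ≤ δ) :
    ∫ t in (0:ℝ)..δ, |t| ^ (-α) = δ ^ (1 - α) / (1 - α) := by
  have : ∫ t in (0:ℝ)..δ, |t| ^ (-α) = ∫ t in (0:ℝ)..δ, t ^ (-α) := by
    apply intervalIntegral.integral_congr
    intro x hx
    rw [uIcc_of_le hδ] at hx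
    simp only []
    rw [abs_of_nonneg hx.1]
  rw [this, integral_rpow (Or.inl (by linarith))]
  rw [Real.zero_rpow (by linarith : -α + 1 ≠ 0)]
  ring_nf

lemma integral_Icc_abs_rpow {α δ : ℝ} (h0 : 0 < α) (h1 : α < 1) (hδ : 0 ≤ δ) :
    ∫ t in Icc (-δ) δ, |t| ^ (-α) = 2 * (δ ^ (1 - α) / (1 - α)) := by
  rw [MeasureTheory.integral_Icc_eq_integral_Ioc,
    ← intervalIntegral.integral_of_le (by linarith : -δ ≤ δ),
    ← intervalIntegral.integral_add_adjacent_intervals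
      (intervalIntegrable_abs_rpow (by linarith) _ _)
      (intervalIntegrable_abs_rpow (by linarith) (0:ℝ) δ)]
  have hneg : ∫ t in (-δ)..(0:ℝ), |t| ^ (-α) = ∫ t in (0:ℝ)..δ, |t| ^ (-α) := by
    have := intervalIntegral.integral_comp_neg (a := (0:ℝ)) (b := δ)
      (f := fun t : ℝ => |t| ^ (-α))
    simp only [abs_neg] at this
    rw [this]; norm_num
  rw [hneg, integral_abs_rpow h0 h1 hδ]; ring

lemma locallyIntegrable_abs_rpow {r : ℝ} (h : -1 < r) :
    MeasureTheory.LocallyIntegrable (fun t : ℝ => |t| ^ r) volume := by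
  rw [MeasureTheory.locallyIntegrable_iff]
  intro k hk
  obtain ⟨M, hM⟩ := hk.isBounded.subset_closedBall 0
  have : IntegrableOn (fun t : ℝ => |t| ^ r) (Metric.closedBall (0:ℝ) M) := by
    rw [Real.closedBall_eq_Icc, zero_sub, zero_add]
    have := intervalIntegrable_abs_rpow h (-M) M
    rcases le_or_gt 0 M with hM2 | hM2
    · rwa [intervalIntegrable_iff_integrableOn_Icc_of_le (by linarith)] at this
    · rw [Icc_eq_empty_of_lt (by linarith)]; exact integrableOn_empty
  exact this.mono_set hM

lemma approx_id (g : ℝ → ℝ) (hg : Continuous g) (hgs : HasCompactSupport g) :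
    Tendsto (fun α : ℝ => ((1 - α) / 2) * ∫ t : ℝ, |t| ^ (-α) * g t)
      (nhdsWithin 1 (Set.Iio 1)) (nhds (g 0)) := by
  have hgint : Integrable g volume := hg.integrable_of_hasCompactSupport hgs
  set M : ℝ := ∫ t, |g t| with hMdef
  have hM0 : 0 ≤ M := integral_nonneg fun t => abs_nonneg _
  rw [Metric.tendsto_nhds]
  intro ε hε
  obtain ⟨δ0, hδ0, hδ0p⟩ := Metric.continuousAt_iff.mp (hg.continuousAt (x := (0:ℝ))) (ε / 3) (by linarith)
  set δ : ℝ := min (δ0 / 2) 1 with hδdef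
  have hδpos : 0 < δ := lt_min (by linarith) one_pos
  have hδ1 : δ ≤ 1 := min_le_right _ _
  have hδlt : δ < δ0 := lt_of_le_of_lt (min_le_left _ _) (by linarith)
  have ev1 : ∀ᶠ α in nhdsWithin 1 (Set.Iio 1), α ∈ Set.Ioo (0 : ℝ) 1 := by
    have h1 : ∀ᶠ α in nhdsWithin 1 (Set.Iio 1), α ∈ Set.Iio (1:ℝ) := self_mem_nhdsWithin
    have h2 : ∀ᶠ α in nhdsWithin 1 (Set.Iio 1), α ∈ Set.Ioi (0:ℝ) :=
      eventually_nhdsWithin_of_eventually_nhds (eventually_gt_nhds one_pos)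
    filter_upwards [h1, h2] with α hα1 hα2
    exact ⟨hα2, hα1⟩
  have ev2 : ∀ᶠ α in nhdsWithin 1 (Set.Iio 1), ((1 - α) / 2) * (δ⁻¹ * M) < ε / 3 := by
    have hcont : Tendsto (fun α : ℝ => ((1 - α) / 2) * (δ⁻¹ * M)) (nhds 1)
        (nhds (((1 - 1) / 2) * (δ⁻¹ * M))) := by
      apply Continuous.tendsto; continuity
    have : Tendsto (fun α : ℝ => ((1 - α) / 2) * (δ⁻¹ * M)) (nhdsWithin 1 (Set.Iio 1))
        (nhds 0) := by
      simpa using hcont.mono_left nhdsWithin_le_nhds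
    exact this.eventually_lt_const (by linarith)
  have ev3 : ∀ᶠ α : ℝ in nhdsWithin 1 (Set.Iio 1), |g 0| * |δ ^ (1 - α) - 1| < ε / 3 := by
    have hceq : (fun α : ℝ => |g 0| * |δ ^ (1 - α) - 1|)
        = fun α : ℝ => |g 0| * |Real.exp (Real.log δ * (1 - α)) - 1| := by
      funext α; rw [Real.rpow_def_of_pos hδpos]
    have hcont : Tendsto (fun α : ℝ => |g 0| * |δ ^ (1 - α) - 1|) (nhds 1) (nhds 0) := by
      rw [hceq]
      have : Continuous fun α : ℝ => |g 0| * |Real.exp (Real.log δ * (1 - α)) - 1| := by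
        continuity
      have h2 := this.tendsto 1
      simpa using h2
    exact (hcont.mono_left nhdsWithin_le_nhds).eventually_lt_const (by linarith)
  filter_upwards [ev1, ev2, ev3] with α hα h2 h3
  obtain ⟨hα0, hα1⟩ := hα
  set k : ℝ → ℝ := fun t => |t| ^ (-α) with hkdef
  set c : ℝ := (1 - α) / 2 with hcdef
  have hc0 : 0 < c := by rw [hcdef]; linarith
  have hk_nonneg : ∀ t, 0 ≤ k t := fun t => Real.rpow_nonneg (abs_nonneg t) _
  have hk_loc : MeasureTheory.LocallyIntegrable k volume :=
    locallyIntegrable_abs_rpow (by linarith)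
  have hkg : Integrable (fun t => k t * g t) volume := by
    have := hk_loc.integrable_smul_right_of_hasCompactSupport hg hgs
    simpa [smul_eq_mul] using this
  set A : Set ℝ := Icc (-δ) δ with hAdef
  have hA : MeasurableSet A := measurableSet_Icc
  have hkA : IntegrableOn k A volume := hk_loc.integrableOn_isCompact isCompact_Icc
  have hAval : ∫ t in A, k t = 2 * (δ ^ (1 - α) / (1 - α)) :=
    integral_Icc_abs_rpow hα0 hα1 hδpos.le
  have hne : (1 : ℝ) - α ≠ 0 := by linarith
  have hcA : c * ∫ t in A, k t = δ ^ (1 - α) := by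
    rw [hAval, hcdef]
    field_simp
  have htotal : ∫ t, k t * g t = (∫ t in A, k t * g t) + ∫ t in Aᶜ, k t * g t :=
    (integral_add_compl hA hkg).symm
  have hsplitA : ∫ t in A, k t * g t
      = (∫ t in A, k t * (g t - g 0)) + (∫ t in A, k t) * g 0 := by
    have hsub : ∫ t in A, k t * (g t - g 0)
        = (∫ t in A, k t * g t) - ∫ t in A, k t * g 0 := by
      simp_rw [mul_sub]
      exact integral_sub hkg.integrableOn (hkA.mul_const (g 0))
    have hmr : ∫ t in A, k t * g 0 = (∫ t in A, k t) * g 0 := integral_mul_const _ _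
    linarith [hsub, hmr]
  -- bound 1
  have b1 : |∫ t in A, k t * (g t - g 0)| ≤ (∫ t in A, k t) * (ε / 3) := by
    have hbint : Integrable (fun t => k t * (ε / 3)) (volume.restrict A) :=
      hkA.mul_const _
    have hbd : ∀ᵐ t ∂volume.restrict A, ‖k t * (g t - g 0)‖ ≤ k t * (ε / 3) := by
      rw [ae_restrict_iff' hA]
      refine ae_of_all _ fun t ht => ?_
      have htabs : |t| ≤ δ := abs_le.mpr ⟨ht.1, ht.2⟩
      have hgt : |g t - g 0| ≤ ε / 3 := by
        have := hδ0p (x := t) (by rw [Real.dist_eq, sub_zero]; linarith)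
        rw [Real.dist_eq] at this; linarith
      rw [Real.norm_eq_abs, abs_mul, abs_of_nonneg (hk_nonneg t)]
      exact mul_le_mul_of_nonneg_left hgt (hk_nonneg t)
    have := norm_integral_le_of_norm_le hbint hbd
    rw [integral_mul_const] at this
    simpa [Real.norm_eq_abs] using this
  -- bound 2
  have b2 : |∫ t in Aᶜ, k t * g t| ≤ δ⁻¹ * M := by
    have hbint : Integrable (fun t => δ⁻¹ * |g t|) (volume.restrict Aᶜ) :=
      (hgint.abs.const_mul δ⁻¹).restrict
    have hbd : ∀ᵐ t ∂volume.restrict Aᶜ, ‖k t * g t‖ ≤ δ⁻¹ * |g t| := by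
      rw [ae_restrict_iff' hA.compl]
      refine ae_of_all _ fun t ht => ?_
      have htabs : δ < |t| := by
        rw [hAdef, mem_compl_iff, mem_Icc, not_and_or] at ht
        rcases ht with ht | ht
        · rw [not_le] at ht
          calc δ < -t := by linarith
            _ ≤ |t| := neg_le_abs t
        · rw [not_le] at ht
          exact lt_of_lt_of_le ht (le_abs_self t)
      have hk1 : k t ≤ δ⁻¹ := by
        have s1 : |t| ^ (-α) ≤ δ ^ (-α) :=
          Real.rpow_le_rpow_of_nonpos hδpos htabs.le (by linarith)
        have s2 : δ ^ (-α) ≤ δ ^ (-1 : ℝ) :=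
          Real.rpow_le_rpow_of_exponent_ge hδpos hδ1 (by linarith)
        rw [Real.rpow_neg_one] at s2
        exact s1.trans s2
      rw [Real.norm_eq_abs, abs_mul, abs_of_nonneg (hk_nonneg t)]
      exact mul_le_mul_of_nonneg_right hk1 (abs_nonneg _) |>.trans
        (mul_le_mul_of_nonneg_left le_rfl (by positivity))
    have hle := norm_integral_le_of_norm_le hbint hbd
    have hle2 : ∫ t in Aᶜ, δ⁻¹ * |g t| ≤ δ⁻¹ * M := by
      rw [integral_const_mul]
      have : ∫ t in Aᶜ, |g t| ≤ M :=
        setIntegral_le_integral hgint.abs (ae_of_all _ fun t => abs_nonneg _)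
      exact mul_le_mul_of_nonneg_left this (by positivity)
    calc |∫ t in Aᶜ, k t * g t| ≤ ∫ t in Aᶜ, δ⁻¹ * |g t| := by
            simpa [Real.norm_eq_abs] using hle
      _ ≤ δ⁻¹ * M := hle2
  -- assemble
  have hdecomp : c * (∫ t, k t * g t) - g 0
      = c * (∫ t in A, k t * (g t - g 0)) + c * (∫ t in Aᶜ, k t * g t)
        + g 0 * (δ ^ (1 - α) - 1) := by
    rw [htotal, hsplitA]
    have : c * ((∫ t in A, k t) * g 0) = δ ^ (1 - α) * g 0 := by
      rw [← mul_assoc, hcA]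
    linear_combination this
  have hd1 : |c * (∫ t in A, k t * (g t - g 0))| ≤ ε / 3 := by
    rw [abs_mul, abs_of_pos hc0]
    calc c * |∫ t in A, k t * (g t - g 0)| ≤ c * ((∫ t in A, k t) * (ε / 3)) :=
          mul_le_mul_of_nonneg_left b1 hc0.le
      _ = (c * ∫ t in A, k t) * (ε / 3) := by ring
      _ = δ ^ (1 - α) * (ε / 3) := by rw [hcA]
      _ ≤ 1 * (ε / 3) := by
          have : δ ^ (1 - α) ≤ 1 := Real.rpow_le_one hδpos.le hδ1 (by linarith)
          nlinarith
      _ = ε / 3 := one_mul _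
  have hd2 : |c * (∫ t in Aᶜ, k t * g t)| < ε / 3 := by
    rw [abs_mul, abs_of_pos hc0]
    calc c * |∫ t in Aᶜ, k t * g t| ≤ c * (δ⁻¹ * M) := mul_le_mul_of_nonneg_left b2 hc0.le
      _ < ε / 3 := h2
  have hd3 : |g 0 * (δ ^ (1 - α) - 1)| < ε / 3 := by rw [abs_mul]; exact h3
  rw [Real.dist_eq, hdecomp]
  calc |c * (∫ t in A, k t * (g t - g 0)) + c * (∫ t in Aᶜ, k t * g t)
        + g 0 * (δ ^ (1 - α) - 1)|
      ≤ |c * (∫ t in A, k t * (g t - g 0)) + c * (∫ t in Aᶜ, k t * g t)|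
        + |g 0 * (δ ^ (1 - α) - 1)| := abs_add_le _ _
    _ ≤ |c * (∫ t in A, k t * (g t - g 0))| + |c * (∫ t in Aᶜ, k t * g t)|
        + |g 0 * (δ ^ (1 - α) - 1)| := by linarith [abs_add_le (c * (∫ t in A, k t * (g t - g 0))) (c * (∫ t in Aᶜ, k t * g t))]
    _ < ε := by linarith

def shearT : Homeomorph (ℝ × ℝ) (ℝ × ℝ) where
  toFun p := (p.1, p.1 - p.2)
  invFun p := (p.1, p.1 - p.2)
  left_inv p := by simp
  right_inv p := by simp
  continuous_toFun := by continuity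
  continuous_invFun := by continuity

lemma shearT_measurePreserving :
    MeasurePreserving (shearT : ℝ × ℝ → ℝ × ℝ)
      ((volume : Measure ℝ).prod volume) ((volume : Measure ℝ).prod volume) := by
  have h1 : MeasurePreserving (fun z : ℝ × ℝ => (z.1, z.2 - z.1))
      ((volume : Measure ℝ).prod volume) ((volume : Measure ℝ).prod volume) :=
    measurePreserving_prod_sub volume volume
  have h2 : MeasurePreserving (fun z : ℝ × ℝ => (z.1, -z.2))
      ((volume : Measure ℝ).prod volume) ((volume : Measure ℝ).prod volume) :=
    (MeasurePreserving.id volume).prod (Measure.measurePreserving_neg volume)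
  have : (shearT : ℝ × ℝ → ℝ × ℝ)
      = (fun z : ℝ × ℝ => (z.1, -z.2)) ∘ fun z : ℝ × ℝ => (z.1, z.2 - z.1) := by
    funext p
    simp only [shearT, Function.comp_apply, Homeomorph.homeomorph_mk_coe, Equiv.coe_fn_mk,
      Prod.mk.injEq, neg_sub]
  rw [this]
  exact h2.comp h1

lemma fubini_riesz (φ ψ : ℝ → ℝ) (hφ : Continuous φ) (hφs : HasCompactSupport φ)
    (hψ : Continuous ψ) (hψs : HasCompactSupport ψ) {α : ℝ} (h0 : 0 < α) (h1 : α < 1) :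
    ∫ x : ℝ, ∫ y : ℝ, φ x * |x - y| ^ (-α) * ψ y
      = ∫ t : ℝ, |t| ^ (-α) * ∫ x : ℝ, φ x * ψ (x - t) := by
  obtain ⟨Cφ, hCφ⟩ := hφs.exists_bound_of_continuous hφ
  obtain ⟨Cψ, hCψ⟩ := hψs.exists_bound_of_continuous hψ
  have hCφ0 : 0 ≤ Cφ := le_trans (norm_nonneg _) (hCφ 0)
  have hCψ0 : 0 ≤ Cψ := le_trans (norm_nonneg _) (hCψ 0)
  obtain ⟨Rφ, hRφ⟩ := hφs.isBounded.subset_closedBall 0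
  obtain ⟨Rψ, hRψ⟩ := hψs.isBounded.subset_closedBall 0
  set R : ℝ := max (max Rφ Rψ) 0 with hRdef
  have hR0 : 0 ≤ R := le_max_right _ _
  have hRφ' : tsupport φ ⊆ Metric.closedBall 0 R :=
    hRφ.trans (Metric.closedBall_subset_closedBall ((le_max_left _ _).trans (le_max_left _ _)))
  have hRψ' : tsupport ψ ⊆ Metric.closedBall 0 R :=
    hRψ.trans (Metric.closedBall_subset_closedBall ((le_max_right _ _).trans (le_max_left _ _)))
  set f : ℝ × ℝ → ℝ := fun p => φ p.1 * |p.2| ^ (-α) * ψ (p.1 - p.2) with hfdef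
  set u : ℝ → ℝ := (Metric.closedBall (0:ℝ) R).indicator (fun _ => Cφ * Cψ) with hudef
  set w : ℝ → ℝ := (Metric.closedBall (0:ℝ) (2 * R)).indicator (fun t => |t| ^ (-α)) with hwdef
  have hu_int : Integrable u volume := by
    rw [hudef, integrable_indicator_iff measurableSet_closedBall]
    exact integrableOn_const measure_closedBall_lt_top.ne
  have hw_int : Integrable w volume := by
    rw [hwdef, integrable_indicator_iff measurableSet_closedBall]
    exact (locallyIntegrable_abs_rpow (by linarith)).integrableOn_isCompact
      (isCompact_closedBall _ _)
  have hu_nonneg : ∀ x, 0 ≤ u x :=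
    fun x => indicator_nonneg (fun _ _ => mul_nonneg hCφ0 hCψ0) x
  have hw_nonneg : ∀ x, 0 ≤ w x :=
    fun x => indicator_nonneg (fun t _ => Real.rpow_nonneg (abs_nonneg t) _) x
  have hD_int : Integrable (fun p : ℝ × ℝ => u p.1 * w p.2)
      ((volume : Measure ℝ).prod volume) := hu_int.mul_prod hw_int
  have hf_meas : AEStronglyMeasurable f ((volume : Measure ℝ).prod volume) := by
    apply Measurable.aestronglyMeasurable
    have hm1 : Measurable φ := hφ.measurable
    have hm2 : Measurable ψ := hψ.measurable
    fun_prop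
  have hf_bound : ∀ p : ℝ × ℝ, ‖f p‖ ≤ u p.1 * w p.2 := by
    intro p
    by_cases hp1 : φ p.1 = 0
    · simp only [hfdef, hp1, zero_mul, norm_zero]
      exact mul_nonneg (hu_nonneg _) (hw_nonneg _)
    by_cases hp2 : ψ (p.1 - p.2) = 0
    · simp only [hfdef, hp2, mul_zero, norm_zero]
      exact mul_nonneg (hu_nonneg _) (hw_nonneg _)
    have h1mem : p.1 ∈ Metric.closedBall (0:ℝ) R :=
      hRφ' (subset_tsupport φ hp1)
    have h2mem : p.1 - p.2 ∈ Metric.closedBall (0:ℝ) R :=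
      hRψ' (subset_tsupport ψ hp2)
    have h3mem : p.2 ∈ Metric.closedBall (0:ℝ) (2 * R) := by
      rw [mem_closedBall_zero_iff] at *
      have : p.2 = p.1 - (p.1 - p.2) := by ring
      rw [this]
      calc ‖p.1 - (p.1 - p.2)‖ ≤ ‖p.1‖ + ‖p.1 - p.2‖ := norm_sub_le _ _
        _ ≤ 2 * R := by linarith
    rw [hudef, hwdef, indicator_of_mem h1mem, indicator_of_mem h3mem]
    have : ‖f p‖ = ‖φ p.1‖ * |p.2| ^ (-α) * ‖ψ (p.1 - p.2)‖ := by
      rw [hfdef]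
      simp only [norm_mul, Real.norm_eq_abs]
      rw [abs_of_nonneg (Real.rpow_nonneg (abs_nonneg _) _)]
    rw [this]
    calc ‖φ p.1‖ * |p.2| ^ (-α) * ‖ψ (p.1 - p.2)‖
        ≤ Cφ * |p.2| ^ (-α) * Cψ :=
          mul_le_mul (mul_le_mul_of_nonneg_right (hCφ _)
            (Real.rpow_nonneg (abs_nonneg _) _)) (hCψ _) (norm_nonneg _)
            (mul_nonneg hCφ0 (Real.rpow_nonneg (abs_nonneg _) _))
      _ = Cφ * Cψ * |p.2| ^ (-α) := by ring
  have hf_int : Integrable f ((volume : Measure ℝ).prod volume) :=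
    hD_int.mono' hf_meas (ae_of_all _ hf_bound)
  have hTemb : MeasurableEmbedding (shearT : ℝ × ℝ → ℝ × ℝ) :=
    shearT.measurableEmbedding
  have hfT : (fun p : ℝ × ℝ => φ p.1 * |p.1 - p.2| ^ (-α) * ψ p.2)
      = f ∘ (shearT : ℝ × ℝ → ℝ × ℝ) := by
    funext p
    simp only [hfdef, Function.comp_apply, shearT]
    norm_num
  have hH_int : Integrable (fun p : ℝ × ℝ => φ p.1 * |p.1 - p.2| ^ (-α) * ψ p.2)
      ((volume : Measure ℝ).prod volume) := by
    rw [hfT]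
    have : Integrable f (((volume : Measure ℝ).prod volume).map shearT) := by
      rw [shearT_measurePreserving.map_eq]; exact hf_int
    exact hTemb.integrable_map_iff.mp this
  calc ∫ x : ℝ, ∫ y : ℝ, φ x * |x - y| ^ (-α) * ψ y
      = ∫ p : ℝ × ℝ, φ p.1 * |p.1 - p.2| ^ (-α) * ψ p.2
          ∂((volume : Measure ℝ).prod volume) :=
        integral_integral (f := fun x y => φ x * |x - y| ^ (-α) * ψ y) hH_int
    _ = ∫ p : ℝ × ℝ, f (shearT p) ∂((volume : Measure ℝ).prod volume) := by rw [hfT]; rfl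
    _ = ∫ p : ℝ × ℝ, f p ∂((volume : Measure ℝ).prod volume) :=
        shearT_measurePreserving.integral_comp hTemb f
    _ = ∫ x : ℝ, ∫ y : ℝ, f (x, y) :=
        (integral_integral (f := fun x y => f (x, y)) hf_int).symm
    _ = ∫ y : ℝ, ∫ x : ℝ, f (x, y) :=
        integral_integral_swap (f := fun x y => f (x, y)) hf_int
    _ = ∫ t : ℝ, |t| ^ (-α) * ∫ x : ℝ, φ x * ψ (x - t) := by
        apply integral_congr_ae (ae_of_all _ fun y => ?_)
        rw [← integral_const_mul]
        congr 1; funext x; simp only [hfdef]; ring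


/-- For continuous compactly supported `φ, ψ : ℝ → ℝ`,
`lim_{α→1⁻} ((1−α)/2) ∫∫ φ(x) |x−y|^{-α} ψ(y) dx dy = ∫ φ(x) ψ(x) dx`:
the renormalized Riesz kernels converge to the white-noise covariance. -/
theorem riesz_kernel_tendsto_white_noise
    (φ ψ : ℝ → ℝ) (hφ : Continuous φ) (hφs : HasCompactSupport φ)
    (hψ : Continuous ψ) (hψs : HasCompactSupport ψ) :
    Tendsto (fun α : ℝ =>
        ((1 - α) / 2) * ∫ x : ℝ, ∫ y : ℝ, φ x * |x - y| ^ (-α) * ψ y)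
      (nhdsWithin 1 (Set.Iio 1)) (nhds (∫ x : ℝ, φ x * ψ x)) := by
  set g : ℝ → ℝ := fun t => ∫ x : ℝ, φ x * ψ (x - t) with hgdef
  set ψn : ℝ → ℝ := fun u => ψ (-u) with hψndef
  have hψnc : Continuous ψn := hψ.comp continuous_neg
  have hψns : HasCompactSupport ψn := hψs.comp_homeomorph (Homeomorph.neg ℝ)
  have hgconv : g = φ ⋆[ContinuousLinearMap.mul ℝ ℝ, volume] ψn := by
    funext t
    rw [hgdef, MeasureTheory.convolution_def]
    simp only
    congr 1
    funext x
    simp only [ContinuousLinearMap.mul_apply', hψndef, neg_sub]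
  have hφloc : MeasureTheory.LocallyIntegrable φ volume :=
    (hφ.integrable_of_hasCompactSupport hφs).locallyIntegrable
  have hgc : Continuous g := by
    rw [hgconv]
    exact hψns.continuous_convolution_right (ContinuousLinearMap.mul ℝ ℝ) hφloc hψnc
  have hgs : HasCompactSupport g := by
    rw [hgconv]
    exact hφs.convolution (L := ContinuousLinearMap.mul ℝ ℝ) hψns
  have hg0 : g 0 = ∫ x : ℝ, φ x * ψ x := by
    rw [hgdef]; simp only [sub_zero]
  have happrox := approx_id g hgc hgs
  rw [hg0] at happrox
  apply happrox.congr'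
  have ev1 : ∀ᶠ α : ℝ in nhdsWithin 1 (Set.Iio 1), α ∈ Set.Ioo (0 : ℝ) 1 := by
    have h1 : ∀ᶠ α : ℝ in nhdsWithin 1 (Set.Iio 1), α ∈ Set.Iio (1:ℝ) := self_mem_nhdsWithin
    have h2 : ∀ᶠ α : ℝ in nhdsWithin 1 (Set.Iio 1), α ∈ Set.Ioi (0:ℝ) :=
      eventually_nhdsWithin_of_eventually_nhds (eventually_gt_nhds one_pos)
    filter_upwards [h1, h2] with α hα1 hα2
    exact ⟨hα2, hα1⟩
  filter_upwards [ev1] with α hα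
  rw [fubini_riesz φ ψ hφ hφs hψ hψs hα.1 hα.2]
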